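/- arXiv:1811.10390 — 5 statements merged into one kernel-verified Lean document; each statement's English description precedes it below -/
import Mathlib

section
/- Let f be a continuous function on an interval (r,1) ⊂ (0,1), let k: ℝ → ℝ be a bounded 2π-periodic Borel function, and let μ be a Borel charge on the unit disk 𝔻. Then ∫_{𝔻 ∖ closure(D(r))} f(|z|) k(arg z) dμ(z) = ∫_{(r,1)} f(t) dμ^rad(t;k), where μ^rad(t;k) := ∫_{|z|≤t} k(arg z) dμ(z) and the right-hand side is a Stieltjes integral over the open interval (r,1). -/
open MeasureTheory Filter Set

noncomputable section

/-- A function `h : ℝ → ℝ` is `ρ`-trigonometrically convex: for `ρ = 0` this means `h` is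
constant; for `ρ ≠ 0` it means that
`h θ ≤ (sin (ρ(θ₂-θ)) h θ₁ + sin (ρ(θ-θ₁)) h θ₂) / sin (ρ(θ₂-θ₁))`
for all `θ ∈ (θ₁, θ₂)` whenever `0 < θ₂ - θ₁ < π/ρ`. -/
def TrigConvex (ρ : ℝ) (h : ℝ → ℝ) : Prop :=
  (ρ = 0 → ∃ c : ℝ, ∀ θ, h θ = c) ∧
  (ρ ≠ 0 → ∀ θ₁ θ₂ θ : ℝ, 0 < θ₂ - θ₁ → θ₂ - θ₁ < Real.pi / ρ → θ₁ < θ → θ < θ₂ →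
    h θ ≤ (Real.sin (ρ * (θ₂ - θ)) * h θ₁ + Real.sin (ρ * (θ - θ₁)) * h θ₂) /
      Real.sin (ρ * (θ₂ - θ₁)))

/-- `u` is subharmonic on the set `U ⊆ ℂ`: `u` is upper semicontinuous on `U` and satisfies
the sub-mean-value inequality on every circle whose closed disk lies in `U`.
(Functions here are real-valued; the paper's value `-∞` is not modelled.) -/
def SubharmonicOn (u : ℂ → ℝ) (U : Set ℂ) : Prop :=
  UpperSemicontinuousOn u U ∧
  ∀ z ∈ U, ∀ r : ℝ, 0 < r → Metric.closedBall z r ⊆ U →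
    u z ≤ (2 * Real.pi)⁻¹ * ∫ θ in (0:ℝ)..(2 * Real.pi), u (circleMap z r θ)

/-- The Laplacian of a (smooth) function `φ : ℂ → ℝ`, as the sum of the second directional
derivatives in the directions `1` and `I`. -/
def lap (φ : ℂ → ℝ) (z : ℂ) : ℝ :=
  fderiv ℝ (fun w => fderiv ℝ φ w 1) z 1 +
    fderiv ℝ (fun w => fderiv ℝ φ w Complex.I) z Complex.I

/-- The pair of positive measures `(μp, μn)` represents the Riesz charge
`μ_M = (1/(2π)) Δ M = μp - μn` of `M` on the open set `U`, in the distributional sense: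
`∫ M Δφ dA = 2π (∫ φ dμp - ∫ φ dμn)` for every smooth `φ` compactly supported in `U`. -/
def IsRieszChargeOn (M : ℂ → ℝ) (U : Set ℂ) (μp μn : MeasureTheory.Measure ℂ) : Prop :=
  ∀ φ : ℂ → ℝ, ContDiff ℝ (⊤ : ℕ∞) φ → HasCompactSupport φ → tsupport φ ⊆ U →
    ∫ z, M z * lap φ z = 2 * Real.pi * ((∫ z, φ z ∂μp) - ∫ z, φ z ∂μn)

/-- `μ` is the Riesz measure `(1/(2π)) Δ u` of `u` on `U`. -/
def IsRieszMeasureOn (u : ℂ → ℝ) (U : Set ℂ) (μ : MeasureTheory.Measure ℂ) : Prop :=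
  IsRieszChargeOn u U μ 0

/-- `M` is δ-subharmonic on `U`: a difference of two subharmonic functions on `U`. -/
def DeltaSubharmonicOn (M : ℂ → ℝ) (U : Set ℂ) : Prop :=
  ∃ M₁ M₂ : ℂ → ℝ, SubharmonicOn M₁ U ∧ SubharmonicOn M₂ U ∧ ∀ z ∈ U, M z = M₁ z - M₂ z

/-- For a positive measure `μ` on `ℂ` and a weight `h ≥ 0`, the measure on `ℝ` whose
distribution function is the radial counting function `r ↦ μ^rad(r; h) = ∫_{|z| ≤ r} h(arg z) dμ`;
it is the pushforward under `z ↦ |z|` of the measure `h (arg z) dμ(z)`.  Integration against it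
is the Stieltjes integral `∫ … dμ^rad(·; h)`. -/
def radMeasure (μ : MeasureTheory.Measure ℂ) (h : ℝ → ℝ) : MeasureTheory.Measure ℝ :=
  MeasureTheory.Measure.map (fun z => ‖z‖)
    (μ.withDensity fun z => ENNReal.ofReal (h (Complex.arg z)))

/-- The sequence `Z` has no limit points in `U`: every compact subset of `U` contains only
finitely many terms of `Z`. -/
def NoLimitPointsIn (Z : ℕ → ℂ) (U : Set ℂ) : Prop :=
  ∀ K : Set ℂ, IsCompact K → K ⊆ U → {k : ℕ | Z k ∈ K}.Finite

/-- `f` vanishes on the sequence `Z` in `U`, counting multiplicities: at every `z ∈ U` the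
number of indices `k` with `Z k = z` is at most the order of vanishing of `f` at `z`. -/
def VanishesOn (f : ℂ → ℂ) (Z : ℕ → ℂ) (U : Set ℂ) : Prop :=
  ∀ z ∈ U, ∃ g : ℂ → ℂ, AnalyticAt ℂ g z ∧
    ∀ᶠ w in nhds z, f w = (w - z) ^ (Nat.card {k : ℕ // Z k = z}) * g w


open Classical in
/-- Auxiliary: a set integral against `radMeasure`-type measures as a weighted integral. -/
lemma radAux (r : ℝ) (F : ℝ → ℝ) (hF : Measurable F)
    (h : ℝ → ℝ) (hh : Measurable h) (ν : MeasureTheory.Measure ℂ) :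
    ∫ t in Set.Ioo r 1, F t
        ∂(MeasureTheory.Measure.map (fun z => ‖z‖)
          (ν.withDensity fun z => ENNReal.ofReal (h (Complex.arg z))))
      = ∫ z in Metric.ball (0:ℂ) 1 \ Metric.closedBall (0:ℂ) r,
          max (h (Complex.arg z)) 0 * F (‖z‖) ∂ν := by
  have hpre : (fun z => ‖z‖) ⁻¹' (Set.Ioo r 1)
      = Metric.ball (0:ℂ) 1 \ Metric.closedBall (0:ℂ) r := by
    ext z
    simp [Metric.mem_ball, Metric.mem_closedBall, Complex.dist_eq, not_le, and_comm]
  have hS : MeasurableSet (Metric.ball (0:ℂ) 1 \ Metric.closedBall (0:ℂ) r) :=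
    Metric.isOpen_ball.measurableSet.diff measurableSet_closedBall
  rw [MeasureTheory.setIntegral_map measurableSet_Ioo
    hF.stronglyMeasurable.aestronglyMeasurable continuous_norm.measurable.aemeasurable,
    hpre, MeasureTheory.restrict_withDensity hS]
  have hd : (fun z : ℂ => ENNReal.ofReal (h (Complex.arg z)))
      = fun z => (((h (Complex.arg z)).toNNReal : NNReal) : ENNReal) := rfl
  rw [hd, integral_withDensity_eq_integral_smul
    (f := fun z : ℂ => (h (Complex.arg z)).toNNReal)
    ((hh.comp Complex.measurable_arg).real_toNNReal)]
  simp [NNReal.smul_def, Real.coe_toNNReal']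

open Classical in
lemma radAuxInt (r : ℝ) (F : ℝ → ℝ) (hF : Measurable F)
    (h : ℝ → ℝ) (hh : Measurable h) (ν : MeasureTheory.Measure ℂ)
    (hi : MeasureTheory.IntegrableOn
      (fun z => max (h (Complex.arg z)) 0 * F (‖z‖))
      (Metric.ball (0:ℂ) 1 \ Metric.closedBall (0:ℂ) r) ν) :
    MeasureTheory.IntegrableOn F (Set.Ioo r 1)
      (MeasureTheory.Measure.map (fun z => ‖z‖)
        (ν.withDensity fun z => ENNReal.ofReal (h (Complex.arg z)))) := by
  have hpre : (fun z => ‖z‖) ⁻¹' (Set.Ioo r 1)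
      = Metric.ball (0:ℂ) 1 \ Metric.closedBall (0:ℂ) r := by
    ext z
    simp [Metric.mem_ball, Metric.mem_closedBall, Complex.dist_eq, not_le, and_comm]
  have hS : MeasurableSet (Metric.ball (0:ℂ) 1 \ Metric.closedBall (0:ℂ) r) :=
    Metric.isOpen_ball.measurableSet.diff measurableSet_closedBall
  rw [MeasureTheory.IntegrableOn,
    MeasureTheory.Measure.restrict_map continuous_norm.measurable measurableSet_Ioo,
    hpre, MeasureTheory.restrict_withDensity hS] at *
  have hd : (fun z : ℂ => ENNReal.ofReal (h (Complex.arg z)))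
      = fun z => (((h (Complex.arg z)).toNNReal : NNReal) : ENNReal) := rfl
  rw [hd, MeasureTheory.integrable_map_measure
      hF.stronglyMeasurable.aestronglyMeasurable continuous_norm.measurable.aemeasurable,
    MeasureTheory.integrable_withDensity_iff_integrable_smul
      (f := fun z : ℂ => (h (Complex.arg z)).toNNReal)
      ((hh.comp Complex.measurable_arg).real_toNNReal)]
  have : (fun z : ℂ => ((h (Complex.arg z)).toNNReal : ℝ) • (F ∘ fun z : ℂ => ‖z‖) z)
      = fun z => max (h (Complex.arg z)) 0 * F (‖z‖) := by
    ext z; simp [NNReal.smul_def, Real.coe_toNNReal']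
  simpa [NNReal.smul_def] using (this ▸ hi : _)

/-- Lemma 1: For a continuous `f` on `(r,1) ⊆ (0,1)`, a bounded `2π`-periodic
Borel `k : ℝ → ℝ` and a Borel charge `μ = μp - μn` on the unit disk `𝔻`,
`∫_{𝔻 ∖ closure D(r)} f(|z|) k(arg z) dμ(z) = ∫_{(r,1)} f(t) dμ^rad(t;k)`.
The Stieltjes measure `dμ^rad(·;k)` of the radial counting function
`t ↦ μ^rad(t;k) = ∫_{|z|≤t} k(arg z) dμ(z)` is the charge
`(radMeasure μp k + radMeasure μn (-k)) - (radMeasure μp (-k) + radMeasure μn k)`,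
the pushforward under `z ↦ |z|` of `k(arg z) dμ(z)` (positive and negative parts). -/
theorem radial_counting_integral (r : ℝ) (hr : 0 ≤ r) (hr1 : r < 1)
    (f : ℝ → ℝ) (hf : ContinuousOn f (Set.Ioo r 1))
    (k : ℝ → ℝ) (hk : Measurable k) (hkper : Function.Periodic k (2 * Real.pi))
    (hkbd : ∃ B : ℝ, ∀ θ, |k θ| ≤ B)
    (μp μn : MeasureTheory.Measure ℂ)
    (hμp : MeasureTheory.IsFiniteMeasure μp) (hμn : MeasureTheory.IsFiniteMeasure μn)
    (hip : MeasureTheory.IntegrableOn (fun z => f (‖z‖) * k (Complex.arg z))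
      (Metric.ball (0 : ℂ) 1 \ Metric.closedBall (0 : ℂ) r) μp)
    (hin : MeasureTheory.IntegrableOn (fun z => f (‖z‖) * k (Complex.arg z))
      (Metric.ball (0 : ℂ) 1 \ Metric.closedBall (0 : ℂ) r) μn) :
    (∫ z in Metric.ball (0 : ℂ) 1 \ Metric.closedBall (0 : ℂ) r,
        f (‖z‖) * k (Complex.arg z) ∂μp) -
      (∫ z in Metric.ball (0 : ℂ) 1 \ Metric.closedBall (0 : ℂ) r,
        f (‖z‖) * k (Complex.arg z) ∂μn)
    = (∫ t in Set.Ioo r 1, f t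
          ∂(radMeasure μp k + radMeasure μn (fun θ => -k θ))) -
        (∫ t in Set.Ioo r 1, f t
          ∂(radMeasure μp (fun θ => -k θ) + radMeasure μn k)) := by
  classical
  set S := Metric.ball (0:ℂ) 1 \ Metric.closedBall (0:ℂ) r with hSdef
  have hS : MeasurableSet S :=
    Metric.isOpen_ball.measurableSet.diff measurableSet_closedBall
  set F : ℝ → ℝ := Set.piecewise (Set.Ioo r 1) f 0 with hFdef
  have hFmeas : Measurable F :=
    ContinuousOn.measurable_piecewise hf continuousOn_const measurableSet_Ioo
  have hmemS : ∀ z ∈ S, ‖z‖ ∈ Set.Ioo r 1 := by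
    intro z hz
    obtain ⟨h1, h2⟩ := hz
    simp only [Metric.mem_ball, Metric.mem_closedBall, Complex.dist_eq, sub_zero] at h1 h2
    exact ⟨lt_of_not_ge h2, h1⟩
  have hFS : ∀ z ∈ S, F (‖z‖) = f (‖z‖) := fun z hz =>
    Set.piecewise_eq_of_mem _ _ _ (hmemS z hz)
  have hFIoo : Set.EqOn f F (Set.Ioo r 1) := fun t ht =>
    (Set.piecewise_eq_of_mem _ _ _ ht).symm
  -- replace f by F in all integrals
  have hL : ∀ ν : MeasureTheory.Measure ℂ,
      ∫ z in S, f (‖z‖) * k (Complex.arg z) ∂ν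
        = ∫ z in S, F (‖z‖) * k (Complex.arg z) ∂ν := fun ν =>
    MeasureTheory.setIntegral_congr_fun hS (fun z hz => by rw [hFS z hz])
  -- integrability of the weighted pieces
  have hbound : ∀ (g : ℝ → ℝ), (∀ θ, |g θ| ≤ |k θ|) →
      ∀ z, ‖max (g (Complex.arg z)) 0 * F (‖z‖)‖
        ≤ ‖F (‖z‖) * k (Complex.arg z)‖ := by
    intro g hg z
    rw [Real.norm_eq_abs, Real.norm_eq_abs]
    calc |max (g (Complex.arg z)) 0 * F (‖z‖)|
        = max (g (Complex.arg z)) 0 * |F (‖z‖)| := by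
          rw [abs_mul, abs_of_nonneg (le_max_right _ _)]
      _ ≤ |k (Complex.arg z)| * |F (‖z‖)| :=
          mul_le_mul_of_nonneg_right
            (max_le ((le_abs_self _).trans (hg _)) (abs_nonneg _)) (abs_nonneg _)
      _ = |F (‖z‖) * k (Complex.arg z)| := by rw [abs_mul]; ring
  have hmeas : ∀ g : ℝ → ℝ, Measurable g →
      MeasureTheory.AEStronglyMeasurable
        (fun z => max (g (Complex.arg z)) 0 * F (‖z‖)) ((μp + μn).restrict S) :=
    fun g hg => (((hg.comp Complex.measurable_arg).max measurable_const).mul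
        (hFmeas.comp continuous_norm.measurable)).stronglyMeasurable.aestronglyMeasurable
  have hint : ∀ (ν : MeasureTheory.Measure ℂ),
      MeasureTheory.IntegrableOn (fun z => f (‖z‖) * k (Complex.arg z)) S ν →
      ∀ (g : ℝ → ℝ), Measurable g → (∀ θ, |g θ| ≤ |k θ|) →
      MeasureTheory.IntegrableOn
        (fun z => max (g (Complex.arg z)) 0 * F (‖z‖)) S ν := by
    intro ν hiv g hg hgk
    have hiv' : MeasureTheory.IntegrableOn
        (fun z => F (‖z‖) * k (Complex.arg z)) S ν :=
      hiv.congr_fun (fun z hz => by rw [hFS z hz]) hS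
    exact MeasureTheory.Integrable.mono hiv'
      ((((hg.comp Complex.measurable_arg).max measurable_const).mul
        (hFmeas.comp continuous_norm.measurable)).stronglyMeasurable.aestronglyMeasurable)
      (Filter.Eventually.of_forall (hbound g hgk))
  have hkk : ∀ θ, |k θ| ≤ |k θ| := fun θ => le_rfl
  have hnk : ∀ θ, |(-k θ)| ≤ |k θ| := fun θ => le_of_eq (abs_neg _)
  have hIpp := hint μp hip k hk hkk
  have hIpm := hint μp hip (fun θ => -k θ) hk.neg hnk
  have hInp := hint μn hin k hk hkk
  have hInm := hint μn hin (fun θ => -k θ) hk.neg hnk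
  -- rewrite RHS
  have hR1 : ∫ t in Set.Ioo r 1, f t
        ∂(radMeasure μp k + radMeasure μn (fun θ => -k θ))
      = (∫ z in S, max (k (Complex.arg z)) 0 * F (‖z‖) ∂μp)
        + ∫ z in S, max (-k (Complex.arg z)) 0 * F (‖z‖) ∂μn := by
    rw [MeasureTheory.setIntegral_congr_fun measurableSet_Ioo hFIoo]
    simp only [radMeasure]
    rw [MeasureTheory.Measure.restrict_add,
      MeasureTheory.integral_add_measure
        (radAuxInt r F hFmeas k hk μp hIpp)
        (radAuxInt r F hFmeas (fun θ => -k θ) hk.neg μn hInm),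
      radAux r F hFmeas k hk μp, radAux r F hFmeas (fun θ => -k θ) hk.neg μn]
  have hR2 : ∫ t in Set.Ioo r 1, f t
        ∂(radMeasure μp (fun θ => -k θ) + radMeasure μn k)
      = (∫ z in S, max (-k (Complex.arg z)) 0 * F (‖z‖) ∂μp)
        + ∫ z in S, max (k (Complex.arg z)) 0 * F (‖z‖) ∂μn := by
    rw [MeasureTheory.setIntegral_congr_fun measurableSet_Ioo hFIoo]
    simp only [radMeasure]
    rw [MeasureTheory.Measure.restrict_add,
      MeasureTheory.integral_add_measure
        (radAuxInt r F hFmeas (fun θ => -k θ) hk.neg μp hIpm)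
        (radAuxInt r F hFmeas k hk μn hInp),
      radAux r F hFmeas (fun θ => -k θ) hk.neg μp, radAux r F hFmeas k hk μn]
  -- rewrite LHS integrals
  have hLside : ∀ (ν : MeasureTheory.Measure ℂ),
      MeasureTheory.IntegrableOn
        (fun z => max (k (Complex.arg z)) 0 * F (‖z‖)) S ν →
      MeasureTheory.IntegrableOn
        (fun z => max (-k (Complex.arg z)) 0 * F (‖z‖)) S ν →
      ∫ z in S, f (‖z‖) * k (Complex.arg z) ∂ν
        = (∫ z in S, max (k (Complex.arg z)) 0 * F (‖z‖) ∂ν)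
          - ∫ z in S, max (-k (Complex.arg z)) 0 * F (‖z‖) ∂ν := by
    intro ν h1 h2
    rw [hL ν, ← MeasureTheory.integral_sub h1 h2]
    refine MeasureTheory.setIntegral_congr_fun hS (fun z hz => ?_)
    have h3 := max_zero_sub_max_neg_zero_eq_self (k (Complex.arg z))
    rw [← sub_mul, h3]
    ring
  rw [hLside μp hIpp hIpm, hLside μn hInp hInm, hR1, hR2]
  ring
end
end

section
/- Let ρ > 0 and let h: ℝ → ℝ be a 2π-periodic function of class C². Then h is ρ-trigonometrically convex if and only if h''(θ) + ρ² h(θ) ≥ 0 for all θ ∈ ℝ. -/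
open MeasureTheory Filter Set

noncomputable section
set_option maxHeartbeats 1000000

private 
lemma key_lemma (ρ a b c : ℝ) (hρ : 0 < ρ) (hac : a < c) (hcb : c < b)
    (hlen : b - a < Real.pi / ρ)
    (φ φ' φ'' : ℝ → ℝ)
    (hd1 : ∀ x, HasDerivAt φ (φ' x) x) (hd2 : ∀ x, HasDerivAt φ' (φ'' x) x)
    (ha : φ a = 0) (hb : φ b = 0) :
    ((∀ x ∈ Set.Icc a b, 0 ≤ φ'' x + ρ^2 * φ x) → φ c ≤ 0) ∧
    ((∀ x ∈ Set.Icc a b, φ'' x + ρ^2 * φ x < 0) → 0 < φ c) := by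
  have hab : a < b := hac.trans hcb
  have hπ : (b - a) * ρ < Real.pi := (lt_div_iff₀ hρ).mp hlen
  set m := (a + b) / 2 with hm
  set w : ℝ → ℝ := fun x => Real.cos (ρ * (x - m)) with hwdef
  set w' : ℝ → ℝ := fun x => -(ρ * Real.sin (ρ * (x - m))) with hw'def
  have hwpos : ∀ x ∈ Set.Icc a b, 0 < w x := by
    intro x hx
    apply Real.cos_pos_of_mem_Ioo
    constructor
    · nlinarith [hx.1, hx.2]
    · nlinarith [hx.1, hx.2]
  have hw : ∀ x, HasDerivAt w (w' x) x := by
    intro x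
    have := (((hasDerivAt_id x).sub_const m).const_mul ρ).cos
    refine this.congr_deriv ?_
    simp [hw'def]; ring
  have hw' : ∀ x, HasDerivAt w' (-(ρ^2 * w x)) x := by
    intro x
    have := ((((hasDerivAt_id x).sub_const m).const_mul ρ).sin.const_mul ρ).neg
    refine this.congr_deriv ?_
    simp [hwdef]; ring
  set g : ℝ → ℝ := fun x => w x * φ' x - w' x * φ x with hgdef
  have hg : ∀ x, HasDerivAt g (w x * (φ'' x + ρ^2 * φ x)) x := by
    intro x
    have := ((hw x).mul (hd2 x)).sub ((hw' x).mul (hd1 x))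
    refine this.congr_deriv ?_
    ring
  have gdiff : Differentiable ℝ g := fun x => (hg x).differentiableAt
  have derivg : ∀ x, deriv g x = w x * (φ'' x + ρ^2 * φ x) := fun x => (hg x).deriv
  set ψ : ℝ → ℝ := fun x => φ x / w x with hψdef
  have hψd : ∀ x ∈ Set.Icc a b, HasDerivAt ψ (g x / (w x)^2) x := by
    intro x hx
    have hw0 := (hwpos x hx).ne'
    have := (hd1 x).div (hw x) hw0
    refine this.congr_deriv ?_
    ring
  have hψcont : ContinuousOn ψ (Set.Icc a b) := fun x hx =>
    ((hψd x hx).differentiableAt.continuousAt).continuousWithinAt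
  have hψa : ψ a = 0 := by simp [hψdef, ha]
  have hψb : ψ b = 0 := by simp [hψdef, hb]
  have hwc : 0 < w c := hwpos c ⟨hac.le, hcb.le⟩
  -- MVT setup, for arbitrary sign of ψ c
  have hIac : Set.Icc a c ⊆ Set.Icc a b := Set.Icc_subset_Icc le_rfl hcb.le
  have hIcb : Set.Icc c b ⊆ Set.Icc a b := Set.Icc_subset_Icc hac.le le_rfl
  obtain ⟨s, hs, hseq⟩ := exists_hasDerivAt_eq_slope ψ (fun x => g x / (w x)^2) hac
    (hψcont.mono hIac) (fun x hx => hψd x (hIac (Set.Ioo_subset_Icc_self hx)))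
  obtain ⟨t, ht, hteq⟩ := exists_hasDerivAt_eq_slope ψ (fun x => g x / (w x)^2) hcb
    (hψcont.mono hIcb) (fun x hx => hψd x (hIcb (Set.Ioo_subset_Icc_self hx)))
  have hsmem : s ∈ Set.Icc a b := hIac (Set.Ioo_subset_Icc_self hs)
  have htmem : t ∈ Set.Icc a b := hIcb (Set.Ioo_subset_Icc_self ht)
  have hst : s < t := hs.2.trans ht.1
  have hws2 : 0 < (w s)^2 := pow_pos (hwpos s hsmem) 2
  have hwt2 : 0 < (w t)^2 := pow_pos (hwpos t htmem) 2
  have hgs : g s = (ψ c - ψ a) / (c - a) * (w s)^2 := by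
    rw [div_eq_iff hws2.ne'] at hseq; exact hseq
  have hgt : g t = (ψ b - ψ c) / (b - c) * (w t)^2 := by
    rw [div_eq_iff hwt2.ne'] at hteq; exact hteq
  constructor
  · intro hL
    by_contra hpos
    push_neg at hpos
    have hψc : 0 < ψ c := div_pos hpos hwc
    have hgs' : 0 < g s := by
      rw [hgs, hψa]
      have : 0 < (ψ c - 0) / (c - a) := div_pos (by linarith) (by linarith)
      positivity
    have hgt' : g t < 0 := by
      rw [hgt, hψb]
      have h1 : (0 - ψ c) / (b - c) < 0 := div_neg_of_neg_of_pos (by linarith) (by linarith)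
      nlinarith
    have mono : MonotoneOn g (Set.Icc a b) := by
      apply monotoneOn_of_deriv_nonneg (convex_Icc a b) gdiff.continuous.continuousOn
        (gdiff.differentiableOn)
      intro x hx
      rw [interior_Icc] at hx
      rw [derivg]
      exact mul_nonneg (hwpos x (Set.Ioo_subset_Icc_self hx)).le
        (hL x (Set.Ioo_subset_Icc_self hx))
    have := mono hsmem htmem hst.le
    linarith
  · intro hL
    by_contra hle
    push_neg at hle
    have hψc : ψ c ≤ 0 := div_nonpos_of_nonpos_of_nonneg hle hwc.le
    have hgs' : g s ≤ 0 := by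
      rw [hgs, hψa]
      have h1 : (ψ c - 0) / (c - a) ≤ 0 := div_nonpos_of_nonpos_of_nonneg (by linarith) (by linarith)
      nlinarith
    have hgt' : 0 ≤ g t := by
      rw [hgt, hψb]
      have h1 : 0 ≤ (0 - ψ c) / (b - c) := div_nonneg (by linarith) (by linarith)
      nlinarith
    have anti : StrictAntiOn g (Set.Icc a b) := by
      apply strictAntiOn_of_deriv_neg (convex_Icc a b) gdiff.continuous.continuousOn
      intro x hx
      rw [interior_Icc] at hx
      rw [derivg]
      exact mul_neg_of_pos_of_neg (hwpos x (Set.Ioo_subset_Icc_self hx))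
        (hL x (Set.Ioo_subset_Icc_self hx))
    have := anti hsmem htmem hst
    linarith

private 
lemma aux_phi (ρ θ₁ θ₂ : ℝ) (h : ℝ → ℝ) (hC2 : ContDiff ℝ 2 h)
    (hS : Real.sin (ρ * (θ₂ - θ₁)) ≠ 0) :
    ∃ φ φ' φ'' : ℝ → ℝ,
      (∀ x, φ x = h x - (Real.sin (ρ * (θ₂ - x)) * h θ₁ + Real.sin (ρ * (x - θ₁)) * h θ₂) /
        Real.sin (ρ * (θ₂ - θ₁))) ∧
      (∀ x, HasDerivAt φ (φ' x) x) ∧ (∀ x, HasDerivAt φ' (φ'' x) x) ∧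
      φ θ₁ = 0 ∧ φ θ₂ = 0 ∧
      (∀ x, φ'' x + ρ^2 * φ x = deriv (deriv h) x + ρ^2 * h x) := by
  have hdh : Differentiable ℝ h := hC2.differentiable two_ne_zero
  have hC1 : ContDiff ℝ 1 (deriv h) := by
    have := (contDiff_succ_iff_deriv (n := 1)).mp (by exact_mod_cast hC2)
    exact this.2.2
  have hdh' : Differentiable ℝ (deriv h) := hC1.differentiable one_ne_zero
  set S := Real.sin (ρ * (θ₂ - θ₁)) with hSdef
  -- derivatives of building blocks
  have dsin1 : ∀ x : ℝ, HasDerivAt (fun x => Real.sin (ρ * (θ₂ - x)))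
      (-(ρ * Real.cos (ρ * (θ₂ - x)))) x := by
    intro x
    have := (((hasDerivAt_id x).const_sub θ₂).const_mul ρ).sin
    refine this.congr_deriv ?_; simp only [id_eq]; ring_nf
  have dsin2 : ∀ x : ℝ, HasDerivAt (fun x => Real.sin (ρ * (x - θ₁)))
      (ρ * Real.cos (ρ * (x - θ₁))) x := by
    intro x
    have := (((hasDerivAt_id x).sub_const θ₁).const_mul ρ).sin
    refine this.congr_deriv ?_; simp only [id_eq]; ring_nf
  have dcos1 : ∀ x : ℝ, HasDerivAt (fun x => -(ρ * Real.cos (ρ * (θ₂ - x))))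
      (-(ρ^2 * Real.sin (ρ * (θ₂ - x)))) x := by
    intro x
    have := ((((hasDerivAt_id x).const_sub θ₂).const_mul ρ).cos.const_mul ρ).neg
    refine this.congr_deriv ?_; simp only [id_eq]; ring_nf
  have dcos2 : ∀ x : ℝ, HasDerivAt (fun x => ρ * Real.cos (ρ * (x - θ₁)))
      (-(ρ^2 * Real.sin (ρ * (x - θ₁)))) x := by
    intro x
    have := (((hasDerivAt_id x).sub_const θ₁).const_mul ρ).cos.const_mul ρ
    refine this.congr_deriv ?_; simp only [id_eq]; ring_nf
  refine ⟨fun x => h x - (Real.sin (ρ * (θ₂ - x)) * h θ₁ + Real.sin (ρ * (x - θ₁)) * h θ₂) / S,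
    fun x => deriv h x - ((-(ρ * Real.cos (ρ * (θ₂ - x)))) * h θ₁ +
      (ρ * Real.cos (ρ * (x - θ₁))) * h θ₂) / S,
    fun x => deriv (deriv h) x - ((-(ρ^2 * Real.sin (ρ * (θ₂ - x)))) * h θ₁ +
      (-(ρ^2 * Real.sin (ρ * (x - θ₁)))) * h θ₂) / S,
    fun x => rfl, ?_, ?_, ?_, ?_, ?_⟩
  · intro x
    exact ((hdh x).hasDerivAt).sub
      ((((dsin1 x).mul_const (h θ₁)).add ((dsin2 x).mul_const (h θ₂))).div_const S)
  · intro x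
    exact ((hdh' x).hasDerivAt).sub
      ((((dcos1 x).mul_const (h θ₁)).add ((dcos2 x).mul_const (h θ₂))).div_const S)
  · simp [sub_self, hSdef]
    rw [← hSdef, mul_div_cancel_left₀ _ hS]; ring
  · simp [sub_self, hSdef]
    rw [← hSdef, mul_div_cancel_left₀ _ hS]; ring
  · intro x
    ring


/-- For `ρ > 0` and a `2π`-periodic `C²` function `h : ℝ → ℝ`,
`h` is `ρ`-trigonometrically convex iff `h''(θ) + ρ² h(θ) ≥ 0` for all `θ`. -/
theorem trigConvex_iff_c2 (ρ : ℝ) (hρ : 0 < ρ) (h : ℝ → ℝ)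
    (hper : Function.Periodic h (2 * Real.pi)) (hC2 : ContDiff ℝ 2 h) :
    TrigConvex ρ h ↔ ∀ θ : ℝ, 0 ≤ deriv (deriv h) θ + ρ ^ 2 * h θ := by
  constructor
  · -- trig convex → differential inequality
    rintro ⟨-, hTC⟩ θ₀
    by_contra h0
    push_neg at h0
    -- continuity of θ ↦ h'' θ + ρ² h θ
    have hC1 : ContDiff ℝ 1 (deriv h) := by
      have := (contDiff_succ_iff_deriv (n := 1)).mp (by exact_mod_cast hC2)
      exact this.2.2
    have hcont : Continuous (fun θ => deriv (deriv h) θ + ρ ^ 2 * h θ) := by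
      have h1 : Continuous (deriv (deriv h)) := by
        have := (contDiff_succ_iff_deriv (n := 0)).mp (by exact_mod_cast hC1)
        exact this.2.2.continuous
      exact h1.add (continuous_const.mul hC2.continuous)
    have hev : ∀ᶠ x in nhds θ₀, deriv (deriv h) x + ρ ^ 2 * h x < 0 :=
      (hcont.continuousAt).eventually_lt continuousAt_const h0
    obtain ⟨ε, hε, hball⟩ := Metric.eventually_nhds_iff.mp hev
    set δ := min (ε / 2) (Real.pi / (4 * ρ)) with hδdef
    have hδ : 0 < δ := lt_min (by linarith) (by positivity)
    set a := θ₀ - δ with hadef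
    set b := θ₀ + δ with hbdef
    have hab : b - a = 2 * δ := by rw [hadef, hbdef]; ring
    have hlen : b - a < Real.pi / ρ := by
      rw [hab, lt_div_iff₀ hρ]
      have h2 : δ ≤ Real.pi / (4 * ρ) := min_le_right _ _
      have h3 : δ * (4 * ρ) ≤ Real.pi := (le_div_iff₀ (by positivity)).mp h2
      have hπ : 0 < Real.pi := Real.pi_pos
      nlinarith
    have hS : 0 < Real.sin (ρ * (b - a)) := by
      apply Real.sin_pos_of_pos_of_lt_pi
      · rw [hab]; positivity
      · calc ρ * (b - a) < ρ * (Real.pi / ρ) := by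
              exact mul_lt_mul_of_pos_left hlen hρ
          _ = Real.pi := by field_simp
    obtain ⟨φ, φ', φ'', hφeq, hd1, hd2, hφa, hφb, hLeq⟩ := aux_phi ρ a b h hC2 hS.ne'
    have hkey := (key_lemma ρ a b θ₀ hρ (by rw [hadef]; linarith) (by rw [hbdef]; linarith)
      hlen φ φ' φ'' hd1 hd2 hφa hφb).2
    have hpos : 0 < φ θ₀ := by
      apply hkey
      intro x hx
      rw [hLeq x]
      apply hball
      rw [Real.dist_eq, abs_lt]
      have h1 : a ≤ x := hx.1
      have h2 : x ≤ b := hx.2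
      have h3 : δ ≤ ε / 2 := min_le_left _ _
      constructor <;> [skip; skip] <;> simp only [hadef, hbdef] at h1 h2 <;> linarith
    have hle : φ θ₀ ≤ 0 := by
      rw [hφeq θ₀, sub_nonpos]
      exact hTC hρ.ne' a b θ₀ (by rw [hab]; linarith) hlen (by rw [hadef]; linarith)
        (by rw [hbdef]; linarith)
    linarith
  · -- differential inequality → trig convex
    intro hL
    refine ⟨fun h0 => absurd h0 hρ.ne', fun _ θ₁ θ₂ θ hpos hlen hθ1 hθ2 => ?_⟩
    have hS : 0 < Real.sin (ρ * (θ₂ - θ₁)) := by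
      apply Real.sin_pos_of_pos_of_lt_pi
      · positivity
      · calc ρ * (θ₂ - θ₁) < ρ * (Real.pi / ρ) := mul_lt_mul_of_pos_left hlen hρ
          _ = Real.pi := by field_simp
    obtain ⟨φ, φ', φ'', hφeq, hd1, hd2, hφa, hφb, hLeq⟩ := aux_phi ρ θ₁ θ₂ h hC2 hS.ne'
    have hkey := (key_lemma ρ θ₁ θ₂ θ hρ hθ1 hθ2 hlen φ φ' φ'' hd1 hd2 hφa hφb).1
    have : φ θ ≤ 0 := hkey (fun x _ => by rw [hLeq x]; exact hL x)
    rw [hφeq θ, sub_nonpos] at this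
    exact this
end
end

section
/- If 0 ≤ ρ ≤ ρ' and h: ℝ → ℝ is a nonnegative 2π-periodic ρ-trigonometrically convex function, then h is also ρ'-trigonometrically convex; that is, the class of nonnegative 2π-periodic ρ-trigonometrically convex functions is contained in the class of nonnegative 2π-periodic ρ'-trigonometrically convex functions. -/
open MeasureTheory Filter Set

noncomputable section

lemma trig_N_nonneg (q : ℝ) (hq0 : 0 ≤ q) (hq1 : q ≤ 1) {t : ℝ} (ht0 : 0 ≤ t)
    (htπ : t ≤ Real.pi) :
    0 ≤ q * Real.cos (q * t) * Real.sin t - Real.sin (q * t) * Real.cos t := by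
  set N : ℝ → ℝ := fun s => q * Real.cos (q * s) * Real.sin s - Real.sin (q * s) * Real.cos s
    with hN
  have hderiv : ∀ s : ℝ, HasDerivAt N ((1 - q ^ 2) * (Real.sin (q * s) * Real.sin s)) s := by
    intro s
    have hid : HasDerivAt (fun x : ℝ => q * x) (q * 1) s := (hasDerivAt_id s).const_mul q
    have hc : HasDerivAt (fun x : ℝ => Real.cos (q * x)) (-Real.sin (q * s) * (q * 1)) s :=
      (Real.hasDerivAt_cos (q * s)).comp s hid
    have hs : HasDerivAt (fun x : ℝ => Real.sin (q * x)) (Real.cos (q * s) * (q * 1)) s :=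
      (Real.hasDerivAt_sin (q * s)).comp s hid
    have := ((hc.const_mul q).mul (Real.hasDerivAt_sin s)).sub (hs.mul (Real.hasDerivAt_cos s))
    refine this.congr_deriv ?_
    ring
  have hmono : MonotoneOn N (Icc 0 Real.pi) := by
    apply monotoneOn_of_deriv_nonneg (convex_Icc 0 Real.pi)
    · exact fun s _ => (hderiv s).continuousAt.continuousWithinAt
    · exact fun s _ => (hderiv s).differentiableAt.differentiableWithinAt
    · intro s hs
      rw [interior_Icc] at hs
      rw [(hderiv s).deriv]
      have h1 : 0 ≤ Real.sin s := Real.sin_nonneg_of_nonneg_of_le_pi hs.1.le hs.2.le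
      have h2 : 0 ≤ Real.sin (q * s) := by
        apply Real.sin_nonneg_of_nonneg_of_le_pi (mul_nonneg hq0 hs.1.le)
        nlinarith [hs.1, hs.2]
      have hq2 : q ^ 2 ≤ 1 := by nlinarith
      have := mul_nonneg h2 h1
      nlinarith
  have h0 : N 0 ≤ N t := hmono ⟨le_refl 0, Real.pi_pos.le⟩ ⟨ht0, htπ⟩ ht0
  simpa [hN] using h0

lemma trig_ratio (q : ℝ) (hq0 : 0 < q) (hq1 : q < 1) {θ θ' : ℝ} (h0 : 0 < θ)
    (hle : θ ≤ θ') (hπ : θ' < Real.pi) :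
    Real.sin (q * θ) * Real.sin θ' ≤ Real.sin (q * θ') * Real.sin θ := by
  have hsinθ : 0 < Real.sin θ := Real.sin_pos_of_pos_of_lt_pi h0 (lt_of_le_of_lt hle hπ)
  have hsinθ' : 0 < Real.sin θ' := Real.sin_pos_of_pos_of_lt_pi (h0.trans_le hle) hπ
  set f : ℝ → ℝ := fun t => Real.sin (q * t) / Real.sin t with hf
  have hder : ∀ t ∈ Icc θ θ', HasDerivAt f
      ((Real.cos (q * t) * (q * 1) * Real.sin t - Real.sin (q * t) * Real.cos t) /
        Real.sin t ^ 2) t := by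
    intro t ht
    have hsint : Real.sin t ≠ 0 :=
      (Real.sin_pos_of_pos_of_lt_pi (h0.trans_le ht.1) (lt_of_le_of_lt ht.2 hπ)).ne'
    have hid : HasDerivAt (fun x : ℝ => q * x) (q * 1) t := (hasDerivAt_id t).const_mul q
    have hs : HasDerivAt (fun x : ℝ => Real.sin (q * x)) (Real.cos (q * t) * (q * 1)) t :=
      (Real.hasDerivAt_sin (q * t)).comp t hid
    exact hs.div (Real.hasDerivAt_sin t) hsint
  have hmono : MonotoneOn f (Icc θ θ') := by
    apply monotoneOn_of_deriv_nonneg (convex_Icc θ θ')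
    · exact fun t ht => (hder t ht).continuousAt.continuousWithinAt
    · intro t ht
      rw [interior_Icc] at ht
      exact (hder t (Ioo_subset_Icc_self ht)).differentiableAt.differentiableWithinAt
    · intro t ht
      rw [interior_Icc] at ht
      rw [(hder t (Ioo_subset_Icc_self ht)).deriv]
      apply div_nonneg _ (sq_nonneg _)
      have := trig_N_nonneg q hq0.le hq1.le (t := t) (h0.trans ht.1).le
        (le_of_lt (ht.2.trans hπ))
      nlinarith [this]
  have hft : f θ ≤ f θ' := hmono ⟨le_refl θ, hle⟩ ⟨hle, le_refl θ'⟩ hle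
  rw [hf] at hft
  rwa [div_le_div_iff₀ hsinθ hsinθ'] at hft

/-- If `0 ≤ ρ ≤ ρ'` and `h` is a nonnegative `2π`-periodic
`ρ`-trigonometrically convex function, then `h` is also `ρ'`-trigonometrically convex. -/
theorem trigConvex_mono (ρ ρ' : ℝ) (hρ : 0 ≤ ρ) (hρρ' : ρ ≤ ρ') (h : ℝ → ℝ)
    (hper : Function.Periodic h (2 * Real.pi)) (hpos : ∀ θ, 0 ≤ h θ)
    (htc : TrigConvex ρ h) :
    TrigConvex ρ' h := by
  constructor
  · intro hρ'0
    exact htc.1 (le_antisymm (hρρ'.trans_eq hρ'0) hρ)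
  · intro hρ'ne θ₁ θ₂ θ hd hdlt h1 h2
    have hρ'pos : 0 < ρ' := lt_of_le_of_ne (hρ.trans hρρ') (Ne.symm hρ'ne)
    have hA : 0 < θ₂ - θ := by linarith
    have hB : 0 < θ - θ₁ := by linarith
    have hC : 0 < θ₂ - θ₁ := hd
    have hAC : θ₂ - θ < θ₂ - θ₁ := by linarith
    have hBC : θ - θ₁ < θ₂ - θ₁ := by linarith
    have hρ'C : ρ' * (θ₂ - θ₁) < Real.pi := by
      rw [lt_div_iff₀ hρ'pos] at hdlt; linarith [hdlt]
    have hρ'Cpos : 0 < ρ' * (θ₂ - θ₁) := by positivity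
    have hρ'A : ρ' * (θ₂ - θ) < Real.pi := by nlinarith
    have hρ'B : ρ' * (θ - θ₁) < Real.pi := by nlinarith
    have hsinC' : 0 < Real.sin (ρ' * (θ₂ - θ₁)) :=
      Real.sin_pos_of_pos_of_lt_pi hρ'Cpos hρ'C
    have hsinA' : 0 ≤ Real.sin (ρ' * (θ₂ - θ)) :=
      (Real.sin_pos_of_pos_of_lt_pi (by positivity) hρ'A).le
    have hsinB' : 0 ≤ Real.sin (ρ' * (θ - θ₁)) :=
      (Real.sin_pos_of_pos_of_lt_pi (by positivity) hρ'B).le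
    rcases eq_or_lt_of_le hρ with hρ0 | hρpos
    · obtain ⟨c, hc⟩ := htc.1 hρ0.symm
      have hc0 : 0 ≤ c := hc θ ▸ hpos θ
      rw [hc θ, hc θ₁, hc θ₂, le_div_iff₀ hsinC']
      have hsum : Real.sin (ρ' * (θ₂ - θ₁)) ≤
          Real.sin (ρ' * (θ₂ - θ)) + Real.sin (ρ' * (θ - θ₁)) := by
        have hE : ρ' * (θ₂ - θ₁) = ρ' * (θ₂ - θ) + ρ' * (θ - θ₁) := by ring
        rw [hE, Real.sin_add]
        nlinarith [Real.cos_le_one (ρ' * (θ₂ - θ)), Real.cos_le_one (ρ' * (θ - θ₁))]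
      nlinarith
    · have hπρ : θ₂ - θ₁ < Real.pi / ρ := by
        apply lt_of_lt_of_le hdlt
        gcongr
      have base := htc.2 (ne_of_gt hρpos) θ₁ θ₂ θ hd hπρ h1 h2
      have hρC : 0 < ρ * (θ₂ - θ₁) := by positivity
      have hρCπ : ρ * (θ₂ - θ₁) < Real.pi := by
        rw [lt_div_iff₀ hρpos] at hπρ; linarith [hπρ]
      have hsinC : 0 < Real.sin (ρ * (θ₂ - θ₁)) := Real.sin_pos_of_pos_of_lt_pi hρC hρCπ
      have hCle : ρ * (θ₂ - θ₁) ≤ ρ' * (θ₂ - θ₁) := by nlinarith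
      have hCne : (θ₂ - θ₁) ≠ 0 := hC.ne'
      have k1 : Real.sin (ρ * (θ₂ - θ)) * Real.sin (ρ' * (θ₂ - θ₁)) ≤
          Real.sin (ρ' * (θ₂ - θ)) * Real.sin (ρ * (θ₂ - θ₁)) := by
        have := trig_ratio ((θ₂ - θ) / (θ₂ - θ₁)) (div_pos hA hC)
          ((div_lt_one hC).mpr hAC) hρC hCle hρ'C
        have e1 : (θ₂ - θ) / (θ₂ - θ₁) * (ρ * (θ₂ - θ₁)) = ρ * (θ₂ - θ) := by
          field_simp
        have e2 : (θ₂ - θ) / (θ₂ - θ₁) * (ρ' * (θ₂ - θ₁)) = ρ' * (θ₂ - θ) := by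
          field_simp
        rwa [e1, e2] at this
      have k2 : Real.sin (ρ * (θ - θ₁)) * Real.sin (ρ' * (θ₂ - θ₁)) ≤
          Real.sin (ρ' * (θ - θ₁)) * Real.sin (ρ * (θ₂ - θ₁)) := by
        have := trig_ratio ((θ - θ₁) / (θ₂ - θ₁)) (div_pos hB hC)
          ((div_lt_one hC).mpr hBC) hρC hCle hρ'C
        have e1 : (θ - θ₁) / (θ₂ - θ₁) * (ρ * (θ₂ - θ₁)) = ρ * (θ - θ₁) := by
          field_simp
        have e2 : (θ - θ₁) / (θ₂ - θ₁) * (ρ' * (θ₂ - θ₁)) = ρ' * (θ - θ₁) := by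
          field_simp
        rwa [e1, e2] at this
      refine le_trans base ?_
      rw [div_le_div_iff₀ hsinC hsinC']
      nlinarith [mul_le_mul_of_nonneg_right k1 (hpos θ₁),
        mul_le_mul_of_nonneg_right k2 (hpos θ₂)]
end
end

section
/- Let ρ > 0. The 2π-periodic continuation of the function h defined on (−π, π] by h(θ) := cos(ρθ) if |θ| < π/(2ρ) and h(θ) := 0 if |θ| ≥ π/(2ρ) is a nonnegative 2π-periodic ρ-trigonometrically convex function. -/
open MeasureTheory Filter Set

noncomputable section

lemma exists_rep (x : ℝ) : ∃ k : ℤ, x - (k : ℝ) * (2 * Real.pi) ∈ Set.Ioc (-Real.pi) Real.pi := by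
  have hπ := Real.pi_pos
  refine ⟨⌈(x - Real.pi) / (2 * Real.pi)⌉, ?_, ?_⟩
  · have h1 : ((⌈(x - Real.pi) / (2 * Real.pi)⌉ : ℝ)) < (x - Real.pi) / (2 * Real.pi) + 1 :=
      Int.ceil_lt_add_one _
    have hd : (x - Real.pi) / (2 * Real.pi) * (2 * Real.pi) = x - Real.pi :=
      div_mul_cancel₀ _ (by positivity)
    nlinarith [mul_lt_mul_of_pos_right h1 (by positivity : (0:ℝ) < 2 * Real.pi)]
  · have h1 : (x - Real.pi) / (2 * Real.pi) ≤ ((⌈(x - Real.pi) / (2 * Real.pi)⌉ : ℝ)) :=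
      Int.le_ceil _
    have hd : (x - Real.pi) / (2 * Real.pi) * (2 * Real.pi) = x - Real.pi :=
      div_mul_cancel₀ _ (by positivity)
    nlinarith [mul_le_mul_of_nonneg_right h1 (by positivity : (0:ℝ) ≤ 2 * Real.pi)]

lemma key_lemma_s14 (ρ : ℝ) (hρ : 0 < ρ) (h : ℝ → ℝ)
    (hper : Function.Periodic h (2 * Real.pi))
    (hdef : ∀ θ ∈ Set.Ioc (-Real.pi) Real.pi,
      h θ = if |θ| < Real.pi / (2 * ρ) then Real.cos (ρ * θ) else 0)
    (hnn : ∀ θ, 0 ≤ h θ)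
    (t : ℝ) (ht : ρ * |t| ≤ 3 * Real.pi / 2) :
    Real.cos (ρ * t) ≤ h t := by
  have hπ := Real.pi_pos
  have hcos : Real.cos (ρ * t) = Real.cos (ρ * |t|) := by
    rw [← Real.cos_abs (ρ * t), abs_mul, abs_of_pos hρ]
  by_cases hc : ρ * |t| < Real.pi / 2
  · -- here we show h t = cos (ρ t') with |t'| ≤ |t|
    obtain ⟨k, hk⟩ := exists_rep t
    set t' := t - (k : ℝ) * (2 * Real.pi) with ht'
    have habs' : |t'| ≤ |t| := by
      rcases eq_or_ne k 0 with rfl | hk0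
      · simp [ht']
      · have h1 : (1 : ℝ) ≤ |(k : ℝ)| := by
          have := Int.one_le_abs hk0
          calc (1:ℝ) = ((1:ℤ):ℝ) := by norm_num
          _ ≤ ((|k| : ℤ) : ℝ) := by exact_mod_cast this
          _ = |(k : ℝ)| := by push_cast; rfl
        have h2 : |t'| ≤ Real.pi := abs_le.mpr ⟨hk.1.le, hk.2⟩
        have h3 : |(k : ℝ) * (2 * Real.pi)| ≤ |t| + |t'| := by
          have : (k : ℝ) * (2 * Real.pi) = t - t' := by rw [ht']; ring
          rw [this]
          exact abs_sub _ _
        rw [abs_mul, abs_of_pos (by positivity : (0:ℝ) < 2 * Real.pi)] at h3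
        nlinarith
    have htlt : |t| < Real.pi / (2 * ρ) := by
      rw [lt_div_iff₀ (by positivity)]
      nlinarith
    have ht'lt : |t'| < Real.pi / (2 * ρ) := lt_of_le_of_lt habs' htlt
    have hval : h t = Real.cos (ρ * t') := by
      rw [← hper.sub_int_mul_eq k, ← ht', hdef t' hk, if_pos ht'lt]
    rw [hval, hcos]
    have hcos' : Real.cos (ρ * t') = Real.cos (ρ * |t'|) := by
      rw [← Real.cos_abs (ρ * t'), abs_mul, abs_of_pos hρ]
    rw [hcos']
    exact Real.cos_le_cos_of_nonneg_of_le_pi (by positivity) (by nlinarith)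
      (by nlinarith [abs_nonneg t', abs_nonneg t])
  · push_neg at hc
    have : Real.cos (ρ * t) ≤ 0 := by
      rw [hcos]
      exact Real.cos_nonpos_of_pi_div_two_le_of_le hc (by nlinarith)
    exact this.trans (hnn t)

/-- For `ρ > 0`, the `2π`-periodic continuation of
`θ ↦ cos (ρθ)` for `|θ| < π/(2ρ)`, `θ ↦ 0` for `|θ| ≥ π/(2ρ)` (on `(-π, π]`)
is a nonnegative `2π`-periodic `ρ`-trigonometrically convex function. -/
theorem trigConvex_truncated_cos (ρ : ℝ) (hρ : 0 < ρ) (h : ℝ → ℝ)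
    (hper : Function.Periodic h (2 * Real.pi))
    (hdef : ∀ θ ∈ Set.Ioc (-Real.pi) Real.pi,
      h θ = if |θ| < Real.pi / (2 * ρ) then Real.cos (ρ * θ) else 0) :
    (∀ θ, 0 ≤ h θ) ∧ TrigConvex ρ h := by
  have hπ := Real.pi_pos
  have hnn : ∀ θ, 0 ≤ h θ := by
    intro θ
    obtain ⟨k, hk⟩ := exists_rep θ
    rw [← hper.sub_int_mul_eq k, hdef _ hk]
    split_ifs with hcase
    · apply Real.cos_nonneg_of_mem_Icc
      have h1 := abs_lt.mp hcase
      have hc : ρ * (Real.pi / (2 * ρ)) = Real.pi / 2 := by field_simp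
      constructor <;> nlinarith [h1.1, h1.2]
    · exact le_refl 0
  refine ⟨hnn, fun h0 => absurd h0 hρ.ne', ?_⟩
  intro _ θ₁ θ₂ θ hlt hlt2 h1θ hθ2
  have hπρ : ρ * (θ₂ - θ₁) < Real.pi := by
    nlinarith [(lt_div_iff₀ hρ).mp hlt2]
  have hsin_pos : 0 < Real.sin (ρ * (θ₂ - θ₁)) :=
    Real.sin_pos_of_pos_of_lt_pi (by nlinarith) hπρ
  have hs1 : 0 < Real.sin (ρ * (θ₂ - θ)) :=
    Real.sin_pos_of_pos_of_lt_pi (by nlinarith) (by nlinarith)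
  have hs2 : 0 < Real.sin (ρ * (θ - θ₁)) :=
    Real.sin_pos_of_pos_of_lt_pi (by nlinarith) (by nlinarith)
  rw [le_div_iff₀ hsin_pos]
  obtain ⟨k, hk⟩ := exists_rep θ
  set s : ℝ := (k : ℝ) * (2 * Real.pi) with hs
  have hθval : h θ = h (θ - s) := (hper.sub_int_mul_eq k).symm
  rw [hθval, hdef _ hk]
  split_ifs with hcase
  · -- main case: h θ = cos (ρ (θ - s))
    have habs := abs_lt.mp hcase
    have hc : ρ * (Real.pi / (2 * ρ)) = Real.pi / 2 := by field_simp
    have hb1 : ρ * (θ - s) < Real.pi / 2 := by nlinarith [habs.2]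
    have hb2 : -(Real.pi / 2) < ρ * (θ - s) := by nlinarith [habs.1]
    -- bounds for θ₁ - s and θ₂ - s
    have hbt1 : ρ * |θ₁ - s| ≤ 3 * Real.pi / 2 := by
      have habs1 : |ρ * (θ₁ - s)| ≤ 3 * Real.pi / 2 :=
        abs_le.mpr ⟨by nlinarith, by nlinarith⟩
      rwa [abs_mul, abs_of_pos hρ] at habs1
    have hbt2 : ρ * |θ₂ - s| ≤ 3 * Real.pi / 2 := by
      have habs2 : |ρ * (θ₂ - s)| ≤ 3 * Real.pi / 2 :=
        abs_le.mpr ⟨by nlinarith, by nlinarith⟩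
      rwa [abs_mul, abs_of_pos hρ] at habs2
    have hk1 : Real.cos (ρ * (θ₁ - s)) ≤ h θ₁ := by
      have := key_lemma_s14 ρ hρ h hper hdef hnn (θ₁ - s) hbt1
      rwa [hper.sub_int_mul_eq k] at this
    have hk2 : Real.cos (ρ * (θ₂ - s)) ≤ h θ₂ := by
      have := key_lemma_s14 ρ hρ h hper hdef hnn (θ₂ - s) hbt2
      rwa [hper.sub_int_mul_eq k] at this
    have hid : Real.cos (ρ * (θ - s)) * Real.sin (ρ * (θ₂ - θ₁)) =
        Real.sin (ρ * (θ₂ - θ)) * Real.cos (ρ * (θ₁ - s)) +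
        Real.sin (ρ * (θ - θ₁)) * Real.cos (ρ * (θ₂ - s)) := by
      have e1 : ρ * (θ₂ - θ₁) = ρ * (θ₂ - s) - ρ * (θ₁ - s) := by ring
      have e2 : ρ * (θ₂ - θ) = ρ * (θ₂ - s) - ρ * (θ - s) := by ring
      have e3 : ρ * (θ - θ₁) = ρ * (θ - s) - ρ * (θ₁ - s) := by ring
      rw [e1, e2, e3, Real.sin_sub, Real.sin_sub, Real.sin_sub]
      ring
    rw [hid]
    exact add_le_add (mul_le_mul_of_nonneg_left hk1 hs1.le)
      (mul_le_mul_of_nonneg_left hk2 hs2.le)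
  · -- h θ = 0
    rw [zero_mul]
    exact add_nonneg (mul_nonneg hs1.le (hnn θ₁)) (mul_nonneg hs2.le (hnn θ₂))
end
end

section
/- Let ρ ≥ 0 and let h be a nonnegative 2π-periodic ρ-trigonometrically convex function. Then there exists a sequence (h_n)_{n∈ℕ} of nonnegative 2π-periodic ρ-trigonometrically convex functions of class C² that decreases pointwise to h as n → ∞. -/
open MeasureTheory Filter Set

noncomputable section

open Convolution
open scoped Convolution

lemma sin_add_le_my {a b : ℝ} (ha : 0 < a) (hb : 0 < b) (hab : a + b < Real.pi) :
    Real.sin (a + b) ≤ Real.sin a + Real.sin b := by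
  have h1 : 0 ≤ Real.sin a := Real.sin_nonneg_of_nonneg_of_le_pi ha.le (by linarith)
  have h2 : 0 ≤ Real.sin b := Real.sin_nonneg_of_nonneg_of_le_pi hb.le (by linarith)
  have c1 : Real.cos a ≤ 1 := Real.cos_le_one a
  have c2 : Real.cos b ≤ 1 := Real.cos_le_one b
  rw [Real.sin_add]
  nlinarith

lemma trigConvex_cont (ρ : ℝ) (hρ : 0 < ρ) (h : ℝ → ℝ)
    (htc : ∀ θ₁ θ₂ θ : ℝ, 0 < θ₂ - θ₁ → θ₂ - θ₁ < Real.pi / ρ → θ₁ < θ → θ < θ₂ →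
      h θ ≤ (Real.sin (ρ * (θ₂ - θ)) * h θ₁ + Real.sin (ρ * (θ - θ₁)) * h θ₂) /
        Real.sin (ρ * (θ₂ - θ₁))) : Continuous h := by
  rw [continuous_iff_continuousAt]
  intro θ₀
  set δ : ℝ := Real.pi / (4 * ρ) with hδdef
  have hπ := Real.pi_pos
  have hδ : 0 < δ := by positivity
  have h2δ : 2 * δ < Real.pi / ρ := by
    have e : 2 * δ = Real.pi / (2 * ρ) := by rw [hδdef]; field_simp; ring
    rw [e, div_lt_div_iff₀ (by positivity) hρ]; nlinarith
  have hsin : ∀ x : ℝ, 0 < x → x ≤ 2 * δ → 0 < Real.sin (ρ * x) := by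
    intro x hx hx2
    apply Real.sin_pos_of_pos_of_lt_pi (by positivity)
    have : ρ * x ≤ ρ * (2 * δ) := by nlinarith
    have h2 : ρ * (2 * δ) = Real.pi / 2 := by rw [hδdef]; field_simp; ring
    nlinarith
  have hS : 0 < Real.sin (ρ * δ) := hsin δ hδ (by linarith)
  rw [continuousAt_iff_continuous_left'_right']
  constructor
  · -- left continuity, θ ∈ (θ₀ - δ, θ₀)
    show Filter.Tendsto h (nhdsWithin θ₀ (Iio θ₀)) (nhds (h θ₀))
    have hup : ∀ θ ∈ Ioo (θ₀ - δ) θ₀, h θ ≤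
        (Real.sin (ρ * (θ₀ - θ)) * h (θ₀ - δ) + Real.sin (ρ * (θ - (θ₀ - δ))) * h θ₀) /
          Real.sin (ρ * δ) := by
      intro θ hθ
      have := htc (θ₀ - δ) θ₀ θ (by linarith) (by linarith [h2δ, hδ]) hθ.1 hθ.2
      have e : θ₀ - (θ₀ - δ) = δ := by ring
      rwa [e] at this
    have hlo : ∀ θ ∈ Ioo (θ₀ - δ) θ₀,
        (h θ₀ * Real.sin (ρ * (θ₀ + δ - θ)) - Real.sin (ρ * (θ₀ - θ)) * h (θ₀ + δ)) /
          Real.sin (ρ * δ) ≤ h θ := by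
      intro θ hθ
      obtain ⟨h1, h2⟩ := hθ
      have key := htc θ (θ₀ + δ) θ₀ (by linarith) (by linarith) h2 (by linarith)
      have hS2 : 0 < Real.sin (ρ * (θ₀ + δ - θ)) := hsin _ (by linarith) (by linarith)
      rw [le_div_iff₀ hS2] at key
      rw [div_le_iff₀ hS]
      have e : θ₀ + δ - θ₀ = δ := by ring
      rw [e] at key
      linarith
    apply tendsto_of_tendsto_of_tendsto_of_le_of_le' (f := h)
      (g := fun θ => (h θ₀ * Real.sin (ρ * (θ₀ + δ - θ)) - Real.sin (ρ * (θ₀ - θ)) * h (θ₀ + δ)) /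
          Real.sin (ρ * δ))
      (h := fun θ => (Real.sin (ρ * (θ₀ - θ)) * h (θ₀ - δ) + Real.sin (ρ * (θ - (θ₀ - δ))) * h θ₀) /
          Real.sin (ρ * δ))
    · have hF : ContinuousAt (fun θ => (h θ₀ * Real.sin (ρ * (θ₀ + δ - θ)) - Real.sin (ρ * (θ₀ - θ)) * h (θ₀ + δ)) / Real.sin (ρ * δ)) θ₀ := by fun_prop
      have hcw : ContinuousWithinAt (fun θ => (h θ₀ * Real.sin (ρ * (θ₀ + δ - θ)) - Real.sin (ρ * (θ₀ - θ)) * h (θ₀ + δ)) / Real.sin (ρ * δ)) (Iio θ₀) θ₀ := hF.continuousWithinAt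
      rw [ContinuousWithinAt] at hcw
      convert hcw using 2
      norm_num
      field_simp
    · have hF : ContinuousAt (fun θ => (Real.sin (ρ * (θ₀ - θ)) * h (θ₀ - δ) + Real.sin (ρ * (θ - (θ₀ - δ))) * h θ₀) / Real.sin (ρ * δ)) θ₀ := by fun_prop
      have hcw : ContinuousWithinAt (fun θ => (Real.sin (ρ * (θ₀ - θ)) * h (θ₀ - δ) + Real.sin (ρ * (θ - (θ₀ - δ))) * h θ₀) / Real.sin (ρ * δ)) (Iio θ₀) θ₀ := hF.continuousWithinAt
      rw [ContinuousWithinAt] at hcw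
      convert hcw using 2
      norm_num
      field_simp
    · filter_upwards [Ioo_mem_nhdsLT_of_mem (by constructor <;> linarith : θ₀ ∈ Ioc (θ₀ - δ) θ₀)] with θ hθ using hlo θ hθ
    · filter_upwards [Ioo_mem_nhdsLT_of_mem (by constructor <;> linarith : θ₀ ∈ Ioc (θ₀ - δ) θ₀)] with θ hθ using hup θ hθ
  · -- right continuity, θ ∈ (θ₀, θ₀ + δ)
    show Filter.Tendsto h (nhdsWithin θ₀ (Ioi θ₀)) (nhds (h θ₀))
    have hup : ∀ θ ∈ Ioo θ₀ (θ₀ + δ), h θ ≤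
        (Real.sin (ρ * (θ₀ + δ - θ)) * h θ₀ + Real.sin (ρ * (θ - θ₀)) * h (θ₀ + δ)) /
          Real.sin (ρ * δ) := by
      intro θ hθ
      have := htc θ₀ (θ₀ + δ) θ (by linarith) (by linarith) hθ.1 hθ.2
      have e : θ₀ + δ - θ₀ = δ := by ring
      rwa [e] at this
    have hlo : ∀ θ ∈ Ioo θ₀ (θ₀ + δ),
        (h θ₀ * Real.sin (ρ * (θ - (θ₀ - δ))) - Real.sin (ρ * (θ - θ₀)) * h (θ₀ - δ)) /
          Real.sin (ρ * δ) ≤ h θ := by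
      intro θ hθ
      obtain ⟨h1, h2⟩ := hθ
      have key := htc (θ₀ - δ) θ θ₀ (by linarith) (by linarith) (by linarith) h1
      have hS2 : 0 < Real.sin (ρ * (θ - (θ₀ - δ))) := hsin _ (by linarith) (by linarith)
      rw [le_div_iff₀ hS2] at key
      rw [div_le_iff₀ hS]
      have e : θ₀ - (θ₀ - δ) = δ := by ring
      rw [e] at key
      linarith
    apply tendsto_of_tendsto_of_tendsto_of_le_of_le' (f := h)
      (g := fun θ => (h θ₀ * Real.sin (ρ * (θ - (θ₀ - δ))) - Real.sin (ρ * (θ - θ₀)) * h (θ₀ - δ)) /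
          Real.sin (ρ * δ))
      (h := fun θ => (Real.sin (ρ * (θ₀ + δ - θ)) * h θ₀ + Real.sin (ρ * (θ - θ₀)) * h (θ₀ + δ)) /
          Real.sin (ρ * δ))
    · have hF : ContinuousAt (fun θ => (h θ₀ * Real.sin (ρ * (θ - (θ₀ - δ))) - Real.sin (ρ * (θ - θ₀)) * h (θ₀ - δ)) / Real.sin (ρ * δ)) θ₀ := by fun_prop
      have hcw : ContinuousWithinAt (fun θ => (h θ₀ * Real.sin (ρ * (θ - (θ₀ - δ))) - Real.sin (ρ * (θ - θ₀)) * h (θ₀ - δ)) / Real.sin (ρ * δ)) (Ioi θ₀) θ₀ := hF.continuousWithinAt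
      rw [ContinuousWithinAt] at hcw
      convert hcw using 2
      norm_num
      field_simp
    · have hF : ContinuousAt (fun θ => (Real.sin (ρ * (θ₀ + δ - θ)) * h θ₀ + Real.sin (ρ * (θ - θ₀)) * h (θ₀ + δ)) / Real.sin (ρ * δ)) θ₀ := by fun_prop
      have hcw : ContinuousWithinAt (fun θ => (Real.sin (ρ * (θ₀ + δ - θ)) * h θ₀ + Real.sin (ρ * (θ - θ₀)) * h (θ₀ + δ)) / Real.sin (ρ * δ)) (Ioi θ₀) θ₀ := hF.continuousWithinAt
      rw [ContinuousWithinAt] at hcw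
      convert hcw using 2
      norm_num
      field_simp
    · filter_upwards [Ioo_mem_nhdsGT_of_mem (by constructor <;> linarith : θ₀ ∈ Ico θ₀ (θ₀ + δ))] with θ hθ using hlo θ hθ
    · filter_upwards [Ioo_mem_nhdsGT_of_mem (by constructor <;> linarith : θ₀ ∈ Ico θ₀ (θ₀ + δ))] with θ hθ using hup θ hθ

lemma periodic_unif (h : ℝ → ℝ) (hc : Continuous h) (hper : Function.Periodic h (2 * Real.pi)) :
    ∀ δ : ℝ, 0 < δ → ∃ ε : ℝ, 0 < ε ∧ ∀ θ t : ℝ, |t| ≤ ε → |h (θ - t) - h θ| ≤ δ := by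
  intro δ hδ
  have hπ := Real.pi_pos
  have hp : 0 < 2 * Real.pi := by linarith
  have hK : IsCompact (Icc (-1 : ℝ) (2 * Real.pi + 1)) := isCompact_Icc
  have huc : UniformContinuousOn h (Icc (-1 : ℝ) (2 * Real.pi + 1)) :=
    hK.uniformContinuousOn_of_continuous hc.continuousOn
  rw [Metric.uniformContinuousOn_iff] at huc
  obtain ⟨ε', hε', hprop⟩ := huc δ hδ
  refine ⟨min (ε' / 2) 1, by positivity, fun θ t ht => ?_⟩
  set k : ℤ := toIcoDiv hp 0 θ with hk
  set θ' : ℝ := toIcoMod hp 0 θ with hθ'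
  have hmem : θ' ∈ Ico (0 : ℝ) (0 + 2 * Real.pi) := toIcoMod_mem_Ico hp 0 θ
  have hsub : θ' = θ - k • (2 * Real.pi) := rfl
  have e1 : h θ' = h θ := by rw [hsub]; exact hper.sub_zsmul_eq k
  have e2 : h (θ' - t) = h (θ - t) := by
    have : θ' - t = (θ - t) - k • (2 * Real.pi) := by rw [hsub]; ring
    rw [this]; exact hper.sub_zsmul_eq k
  have ht1 : |t| ≤ 1 := le_trans ht (min_le_right _ _)
  have ht2 : |t| < ε' := lt_of_le_of_lt (le_trans ht (min_le_left _ _)) (by linarith)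
  have habs := abs_le.mp ht1
  have hm1 : θ' - t ∈ Icc (-1 : ℝ) (2 * Real.pi + 1) := by
    constructor
    · have := hmem.1; linarith [habs.1, habs.2]
    · have := hmem.2; simp at this ⊢; linarith [habs.1, habs.2, hmem.1]
  have hm2 : θ' ∈ Icc (-1 : ℝ) (2 * Real.pi + 1) := by
    constructor
    · linarith [hmem.1]
    · have := hmem.2; linarith [hmem.1]
  have := hprop (θ' - t) hm1 θ' hm2 (by rw [Real.dist_eq]; simpa using ht2)
  rw [Real.dist_eq] at this
  rw [← e1, ← e2]
  exact le_of_lt (by simpa using this)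

lemma smooth_step (ρ : ℝ) (hρ : 0 < ρ) (h : ℝ → ℝ) (hc : Continuous h)
    (hper : Function.Periodic h (2 * Real.pi)) (hpos : ∀ θ, 0 ≤ h θ)
    (htc : ∀ θ₁ θ₂ θ : ℝ, 0 < θ₂ - θ₁ → θ₂ - θ₁ < Real.pi / ρ → θ₁ < θ → θ < θ₂ →
      h θ ≤ (Real.sin (ρ * (θ₂ - θ)) * h θ₁ + Real.sin (ρ * (θ - θ₁)) * h θ₂) /
        Real.sin (ρ * (θ₂ - θ₁)))
    (δ b : ℝ) (hb : 0 < b) (hh : ∀ θ t : ℝ, |t| ≤ b → |h (θ - t) - h θ| ≤ δ) :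
    ∃ g : ℝ → ℝ, Function.Periodic g (2 * Real.pi) ∧ (∀ θ, 0 ≤ g θ) ∧
      (∀ θ₁ θ₂ θ : ℝ, 0 < θ₂ - θ₁ → θ₂ - θ₁ < Real.pi / ρ → θ₁ < θ → θ < θ₂ →
        g θ ≤ (Real.sin (ρ * (θ₂ - θ)) * g θ₁ + Real.sin (ρ * (θ - θ₁)) * g θ₂) /
          Real.sin (ρ * (θ₂ - θ₁))) ∧
      ContDiff ℝ 2 g ∧ (∀ θ, |g θ - h θ| ≤ δ) := by
  set φ : ContDiffBump (0 : ℝ) := ⟨b / 2, b, by positivity, by linarith⟩ with hφ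
  set ψ : ℝ → ℝ := φ.normed volume with hψ
  have hψc : Continuous ψ := φ.continuous_normed
  have hψsupp : HasCompactSupport ψ := φ.hasCompactSupport_normed
  have hψnn : ∀ t, 0 ≤ ψ t := φ.nonneg_normed
  have hψint : ∫ t, ψ t = 1 := φ.integral_normed
  have hint : ∀ θ' : ℝ, Integrable (fun t => ψ t * h (θ' - t)) := by
    intro θ'
    exact (hψc.mul (hc.comp (continuous_const.sub continuous_id))).integrable_of_hasCompactSupport
      (hψsupp.mul_right)
  set g : ℝ → ℝ := fun θ => ∫ t, ψ t * h (θ - t) with hg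
  refine ⟨g, ?_, ?_, ?_, ?_, ?_⟩
  · intro θ
    simp only [hg]
    congr 1; funext t; congr 1
    rw [show θ + 2 * Real.pi - t = (θ - t) + 2 * Real.pi from by ring, hper]
  · intro θ
    exact integral_nonneg fun t => mul_nonneg (hψnn t) (hpos _)
  · intro θ₁ θ₂ θ hd1 hd2 hl1 hl2
    have hS : 0 < Real.sin (ρ * (θ₂ - θ₁)) := by
      apply Real.sin_pos_of_pos_of_lt_pi (by positivity)
      calc ρ * (θ₂ - θ₁) < ρ * (Real.pi / ρ) := by nlinarith
        _ = Real.pi := by field_simp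
    rw [le_div_iff₀ hS]
    have pointwise : ∀ t : ℝ, ψ t * h (θ - t) * Real.sin (ρ * (θ₂ - θ₁)) ≤
        Real.sin (ρ * (θ₂ - θ)) * (ψ t * h (θ₁ - t)) +
        Real.sin (ρ * (θ - θ₁)) * (ψ t * h (θ₂ - t)) := by
      intro t
      have key := htc (θ₁ - t) (θ₂ - t) (θ - t) (by linarith) (by linarith) (by linarith)
        (by linarith)
      rw [show θ₂ - t - (θ₁ - t) = θ₂ - θ₁ from by ring,
        show θ₂ - t - (θ - t) = θ₂ - θ from by ring,
        show θ - t - (θ₁ - t) = θ - θ₁ from by ring, le_div_iff₀ hS] at key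
      have := mul_le_mul_of_nonneg_left key (hψnn t)
      nlinarith [hψnn t]
    have i1 : Integrable (fun t => ψ t * h (θ - t) * Real.sin (ρ * (θ₂ - θ₁))) :=
      (hint θ).mul_const _
    have i2 : Integrable (fun t => Real.sin (ρ * (θ₂ - θ)) * (ψ t * h (θ₁ - t)) +
        Real.sin (ρ * (θ - θ₁)) * (ψ t * h (θ₂ - t))) :=
      ((hint θ₁).const_mul _).add ((hint θ₂).const_mul _)
    have := integral_mono i1 i2 pointwise
    rwa [integral_mul_const, integral_add ((hint θ₁).const_mul _) ((hint θ₂).const_mul _),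
      integral_const_mul, integral_const_mul] at this
  · have hconv : g = (ψ ⋆[ContinuousLinearMap.mul ℝ ℝ, volume] h) := by
      funext θ
      rw [convolution_def]
      simp [hg]
    rw [hconv]
    exact hψsupp.contDiff_convolution_left _ φ.contDiff_normed hc.locallyIntegrable
  · intro θ
    have e0 : g θ - h θ = ∫ t, ψ t * (h (θ - t) - h θ) := by
      have : (fun t => ψ t * (h (θ - t) - h θ)) = fun t => ψ t * h (θ - t) - ψ t * h θ := by
        funext t; ring
      rw [this, integral_sub (hint θ) ((Integrable.mul_const ?_ _)), integral_mul_const, hψint,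
        one_mul]
      · exact φ.integrable_normed
    rw [e0]
    have habs : |∫ t, ψ t * (h (θ - t) - h θ)| ≤ ∫ t, |ψ t| * |h (θ - t) - h θ| := by
      have := norm_integral_le_integral_norm (μ := volume) (fun t => ψ t * (h (θ - t) - h θ))
      simpa [Real.norm_eq_abs, abs_mul] using this
    have hptw : ∀ t, |ψ t| * |h (θ - t) - h θ| ≤ ψ t * δ := by
      intro t
      by_cases ht : ψ t = 0
      · simp [ht]
      · have hts : t ∈ Function.support ψ := ht
        rw [hψ, φ.support_normed_eq] at hts
        simp only [Metric.mem_ball, Real.dist_eq, sub_zero] at hts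
        rw [abs_of_nonneg (hψnn t)]
        exact mul_le_mul_of_nonneg_left (hh θ t (le_of_lt hts)) (hψnn t)
    have hi1 : Integrable (fun t => |ψ t| * |h (θ - t) - h θ|) := by
      have e : (fun t => |ψ t| * |h (θ - t) - h θ|) = fun t => |ψ t * (h (θ - t) - h θ)| := by
        funext t; rw [abs_mul]
      rw [e]
      apply Integrable.abs
      have : (fun t => ψ t * (h (θ - t) - h θ)) = fun t => ψ t * h (θ - t) - ψ t * h θ := by
        funext t; ring
      rw [this]
      exact (hint θ).sub (φ.integrable_normed.mul_const _)
    have hi2 : Integrable (fun t => ψ t * δ) := φ.integrable_normed.mul_const _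
    have := integral_mono hi1 hi2 hptw
    rw [integral_mul_const, hψint, one_mul] at this
    exact le_trans habs this

/-- Every nonnegative `2π`-periodic `ρ`-trigonometrically convex function
(`ρ ≥ 0`) is the pointwise decreasing limit of a sequence of nonnegative `2π`-periodic
`ρ`-trigonometrically convex functions of class `C²`. -/
theorem trigConvex_smooth_approximation (ρ : ℝ) (hρ : 0 ≤ ρ) (h : ℝ → ℝ)
    (hper : Function.Periodic h (2 * Real.pi)) (hpos : ∀ θ, 0 ≤ h θ)
    (htc : TrigConvex ρ h) :
    ∃ hn : ℕ → ℝ → ℝ,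
      (∀ n, Function.Periodic (hn n) (2 * Real.pi) ∧ (∀ θ, 0 ≤ hn n θ) ∧
        TrigConvex ρ (hn n) ∧ ContDiff ℝ 2 (hn n)) ∧
      (∀ θ, Antitone fun n => hn n θ) ∧
      (∀ θ, Filter.Tendsto (fun n => hn n θ) Filter.atTop (nhds (h θ))) := by
  obtain ⟨htc0, htc1⟩ := htc
  rcases eq_or_lt_of_le hρ with hρ0 | hρ0
  · -- case ρ = 0
    obtain ⟨c, hcc⟩ := htc0 hρ0.symm
    refine ⟨fun _ _ => c, fun n => ⟨fun θ => rfl, fun θ => ?_, ⟨fun _ => ⟨c, fun _ => rfl⟩,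
      fun hne => absurd hρ0.symm hne⟩, contDiff_const⟩, fun θ => antitone_const,
      fun θ => ?_⟩
    · rw [← hcc 0]; exact hpos 0
    · rw [hcc θ]; exact tendsto_const_nhds
  · -- case ρ > 0
    have hρne : ρ ≠ 0 := ne_of_gt hρ0
    have htc2 := htc1 hρne
    have hc : Continuous h := trigConvex_cont ρ hρ0 h htc2
    have main : ∀ n : ℕ, ∃ g : ℝ → ℝ, Function.Periodic g (2 * Real.pi) ∧ (∀ θ, 0 ≤ g θ) ∧
        (∀ θ₁ θ₂ θ : ℝ, 0 < θ₂ - θ₁ → θ₂ - θ₁ < Real.pi / ρ → θ₁ < θ → θ < θ₂ →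
          g θ ≤ (Real.sin (ρ * (θ₂ - θ)) * g θ₁ + Real.sin (ρ * (θ - θ₁)) * g θ₂) /
            Real.sin (ρ * (θ₂ - θ₁))) ∧
        ContDiff ℝ 2 g ∧ (∀ θ, |g θ - h θ| ≤ (1/2 : ℝ)^n) := by
      intro n
      obtain ⟨ε, hε0, hεp⟩ := periodic_unif h hc hper ((1/2 : ℝ)^n) (by positivity)
      exact smooth_step ρ hρ0 h hc hper hpos htc2 _ ε hε0 hεp
    choose g hg1 hg2 hg3 hg4 hg5 using main
    refine ⟨fun n θ => g n θ + 3 * (1/2 : ℝ)^n, fun n => ⟨?_, ?_, ?_, ?_⟩, ?_, ?_⟩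
    · intro θ; simp only [hg1 n θ]
    · intro θ; have := hg2 n θ; positivity
    · refine ⟨fun h0 => absurd h0 hρne, fun _ θ₁ θ₂ θ hd1 hd2 h1 h2 => ?_⟩
      have hπ := Real.pi_pos
      have hlt : ρ * (θ₂ - θ₁) < Real.pi := by
        calc ρ * (θ₂ - θ₁) < ρ * (Real.pi / ρ) := by nlinarith
          _ = Real.pi := by field_simp
      have hS : 0 < Real.sin (ρ * (θ₂ - θ₁)) :=
        Real.sin_pos_of_pos_of_lt_pi (by positivity) hlt
      have hsa : 0 ≤ Real.sin (ρ * (θ₂ - θ)) :=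
        Real.sin_nonneg_of_nonneg_of_le_pi (by nlinarith) (by nlinarith)
      have hsb : 0 ≤ Real.sin (ρ * (θ - θ₁)) :=
        Real.sin_nonneg_of_nonneg_of_le_pi (by nlinarith) (by nlinarith)
      have hsum : Real.sin (ρ * (θ₂ - θ₁)) ≤
          Real.sin (ρ * (θ₂ - θ)) + Real.sin (ρ * (θ - θ₁)) := by
        rw [show ρ * (θ₂ - θ₁) = ρ * (θ₂ - θ) + ρ * (θ - θ₁) from by ring]
        exact sin_add_le_my (by nlinarith) (by nlinarith) (by nlinarith)
      have hkey := hg3 n θ₁ θ₂ θ hd1 hd2 h1 h2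
      rw [le_div_iff₀ hS] at hkey ⊢
      have hCpos : (0:ℝ) ≤ 3 * (1/2 : ℝ)^n := by positivity
      nlinarith
    · exact (hg4 n).add contDiff_const
    · intro θ
      apply antitone_nat_of_succ_le
      intro n
      have A := abs_le.mp (hg5 n θ)
      have B := abs_le.mp (hg5 (n+1) θ)
      rw [pow_succ] at B
      simp only [pow_succ]
      linarith [A.1, B.2]
    · intro θ
      have hq : Tendsto (fun n : ℕ => (1/2 : ℝ)^n) atTop (nhds 0) :=
        tendsto_pow_atTop_nhds_zero_of_lt_one (by norm_num) (by norm_num)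
      have h1 : Tendsto (fun n : ℕ => h θ - 4 * (1/2 : ℝ)^n) atTop (nhds (h θ)) := by
        have := tendsto_const_nhds (x := h θ) (f := atTop (α := ℕ))
        simpa using this.sub (hq.const_mul 4)
      have h2 : Tendsto (fun n : ℕ => h θ + 4 * (1/2 : ℝ)^n) atTop (nhds (h θ)) := by
        have := tendsto_const_nhds (x := h θ) (f := atTop (α := ℕ))
        simpa using this.add (hq.const_mul 4)
      apply tendsto_of_tendsto_of_tendsto_of_le_of_le h1 h2
      · intro n
        have A := abs_le.mp (hg5 n θ)
        simp only
        nlinarith [pow_nonneg (by norm_num : (0:ℝ) ≤ 1/2) n]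
      · intro n
        have A := abs_le.mp (hg5 n θ)
        simp only
        nlinarith [pow_nonneg (by norm_num : (0:ℝ) ≤ 1/2) n]
end
end
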